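/- Let K be a compact Hausdorff space, M a compact metric space, and f : K → M a continuous map. If K admits a continuous surjection onto [0,1]^{ω₁}, then there exists t ∈ M such that the fiber f⁻¹({t}) admits a continuous surjection onto [0,1]^{ω₁}. -/

import Mathlib

open MeasureTheory Set

/-- The index set of ordinals below `ω₁`. -/
abbrev Omega1 : Type 1 := {α : Ordinal // α < (Cardinal.aleph 1).ord}

/-- The Tychonoff cube `[0,1]^{ω₁}`. -/
abbrev Cube : Type 1 := Omega1 → Set.Icc (0:ℝ) 1

namespace Stmt0Aux

abbrev PF : Type 1 := Omega1 → Option (Set.Icc (0:ℝ) 1)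

def Q (σ : PF) : Set Cube := {x | ∀ α v, σ α = some v → x α = v}

def Ext (σ τ : PF) : Prop := ∀ α v, σ α = some v → τ α = some v

lemma Ext.rfl (σ : PF) : Ext σ σ := fun _ _ h => h

lemma Ext.trans {σ τ ρ : PF} (h1 : Ext σ τ) (h2 : Ext τ ρ) : Ext σ ρ :=
  fun α v h => h2 α v (h1 α v h)

lemma Q_mono {σ τ : PF} (h : Ext σ τ) : Q τ ⊆ Q σ := fun x hx α v hv => hx α v (h α v hv)

lemma isClosed_Q (σ : PF) : IsClosed (Q σ) := by
  have : Q σ = ⋂ (α : Omega1), ⋂ (v : Set.Icc (0:ℝ) 1), ⋂ (_ : σ α = some v),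
      {x : Cube | x α = v} := by
    ext x; simp only [Q, mem_setOf_eq, mem_iInter]
  rw [this]
  exact isClosed_iInter fun α => isClosed_iInter fun v => isClosed_iInter fun _ =>
    isClosed_eq (continuous_apply α) continuous_const

def pt0 : Set.Icc (0:ℝ) 1 := ⟨0, by norm_num⟩

lemma Q_nonempty (σ : PF) : (Q σ).Nonempty := by
  classical
  refine ⟨fun α => (σ α).getD pt0, fun α v hv => ?_⟩
  simp [hv]

lemma step_baire {σ : PF} {ι : Type*} [Finite ι] (C : ι → Set Cube)
    (hC : ∀ i, IsClosed (C i)) (hcov : Q σ ⊆ ⋃ i, C i) :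
    ∃ (τ : PF) (i : ι) (F : Finset Omega1),
      (∀ α, α ∉ F → τ α = σ α) ∧ Ext σ τ ∧ Q τ ⊆ C i := by
  classical
  haveI : CompactSpace (Q σ) := isCompact_iff_compactSpace.mp (isClosed_Q σ).isCompact
  haveI : Nonempty (Q σ) := (Q_nonempty σ).to_subtype
  obtain ⟨i, hi⟩ := nonempty_interior_of_iUnion_of_closed
      (f := fun i => (Subtype.val ⁻¹' (C i) : Set (Q σ)))
      (fun i => (hC i).preimage continuous_subtype_val)
      (by
        ext x
        simp only [mem_iUnion, mem_univ, iff_true, mem_preimage]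
        exact mem_iUnion.mp (hcov x.2))
  obtain ⟨x0, hx0⟩ := hi
  obtain ⟨U, hUsub, hUopen, hxU⟩ := mem_interior.mp hx0
  obtain ⟨V, hVopen, rfl⟩ := isOpen_induced_iff.mp hUopen
  obtain ⟨F, u, hu, hpi⟩ := isOpen_pi_iff.mp hVopen x0.val hxU
  refine ⟨fun α => if α ∈ F then some (x0.val α) else σ α, i, F, ?_, ?_, ?_⟩
  · intro α hα; simp [hα]
  · intro α v hv
    by_cases hα : α ∈ F
    · have := x0.2 α v hv
      simp [hα, this]
    · simp [hα, hv]
  · intro x hx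
    have hxσ : x ∈ Q σ := by
      intro α v hv
      by_cases hα : α ∈ F
      · have h1 : x α = x0.val α := hx α (x0.val α) (by simp [hα])
        rw [h1, x0.2 α v hv]
      · exact hx α v (by simp [hα, hv])
    have hxV : x ∈ V := by
      apply hpi
      intro α hα
      have hαF : α ∈ F := hα
      have h1 : x α = x0.val α := hx α (x0.val α) (by simp [hαF])
      rw [h1]
      exact (hu α hα).2
    exact hUsub (show (⟨x, hxσ⟩ : Q σ) ∈ Subtype.val ⁻¹' V from hxV)



lemma add_lt_omega1 {a b : Ordinal} (ha : a < (Cardinal.aleph 1).ord)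
    (hb : b < (Cardinal.aleph 1).ord) : a + b < (Cardinal.aleph 1).ord := by
  rw [Cardinal.lt_ord] at *
  rw [Ordinal.card_add]
  rw [← Cardinal.succ_aleph0, Order.lt_succ_iff] at ha hb ⊢
  calc a.card + b.card ≤ Cardinal.aleph0 + Cardinal.aleph0 := add_le_add ha hb
    _ = Cardinal.aleph0 := Cardinal.aleph0_add_aleph0

lemma one_lt_omega1 : (1 : Ordinal) < (Cardinal.aleph 1).ord := by
  rw [Cardinal.lt_ord]
  simp

-- countable set of ordinals below omega1 has a strict upper bound
lemma bound_lt_omega1 (S : Set Ordinal) (hS : S.Countable) (hSne : S.Nonempty)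
    (h : ∀ a ∈ S, a < (Cardinal.aleph 1).ord) :
    ∃ b < (Cardinal.aleph 1).ord, ∀ a ∈ S, a ≤ b := by
  obtain ⟨o, rfl⟩ := hS.exists_eq_range hSne
  refine ⟨iSup o, ?_, ?_⟩
  · rw [Cardinal.ord_aleph]
    exact Ordinal.iSup_lt_omega_one (f := o) (fun n => Cardinal.ord_aleph 1 ▸ h _ (mem_range_self n))
  · rintro a ⟨n, rfl⟩
    exact le_ciSup (Ordinal.bddAbove_range o) n

lemma step_metric {K M : Type*} [TopologicalSpace K] [CompactSpace K] [T2Space K]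
    [MetricSpace M] [CompactSpace M] (f : K → M) (hf : Continuous f)
    (g : K → Cube) (hg : Continuous g)
    (σ : PF) (B : Set M) (hB : IsClosed B) (hQB : Q σ ⊆ g '' (f ⁻¹' B))
    (ε : ℝ) (hε : 0 < ε) :
    ∃ (τ : PF) (B' : Set M) (F : Finset Omega1) (c : M),
      (∀ α, α ∉ F → τ α = σ α) ∧ Ext σ τ ∧ IsClosed B' ∧ B' ⊆ B ∧
      B' ⊆ Metric.closedBall c ε ∧ Q τ ⊆ g '' (f ⁻¹' B') := by
  obtain ⟨T, hT⟩ := isCompact_univ.elim_finite_subcover (fun c : M => Metric.ball c ε)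
    (fun c => Metric.isOpen_ball) (fun x _ => mem_iUnion.mpr ⟨x, Metric.mem_ball_self hε⟩)
  set C : T → Set Cube := fun c => g '' (f ⁻¹' (B ∩ Metric.closedBall c ε)) with hCdef
  have hCclosed : ∀ c : T, IsClosed (C c) := fun c =>
    ((((hB.inter Metric.isClosed_closedBall).preimage hf).isCompact).image hg).isClosed
  have hcov : Q σ ⊆ ⋃ c : T, C c := by
    intro x hx
    obtain ⟨k, hk, rfl⟩ := hQB hx
    have : f k ∈ ⋃ c ∈ T, Metric.ball c ε := hT (mem_univ _)
    simp only [mem_iUnion] at this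
    obtain ⟨c, hcT, hc⟩ := this
    exact mem_iUnion.mpr ⟨⟨c, hcT⟩, ⟨k, ⟨hk, Metric.ball_subset_closedBall hc⟩, rfl⟩⟩
  obtain ⟨τ, c, F, h1, h2, h3⟩ := step_baire C hCclosed hcov
  exact ⟨τ, B ∩ Metric.closedBall c ε, F, c, h1, h2,
    hB.inter Metric.isClosed_closedBall, inter_subset_left,
    inter_subset_right, h3⟩

end Stmt0Aux

open Stmt0Aux in
theorem stmt0 {K M : Type*} [TopologicalSpace K] [CompactSpace K] [T2Space K]
    [MetricSpace M] [CompactSpace M] (f : K → M) (hf : Continuous f)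
    (g : K → Cube) (hg : Continuous g) (hgs : Function.Surjective g) :
    ∃ t : M, ∃ h : (f ⁻¹' {t}) → Cube,
      Continuous h ∧ Function.Surjective h := by
  classical
  -- the state: a partial function with finite support and a closed set with the covering property
  let Good : PF → Set M → Prop := fun σ B =>
    {α | σ α ≠ none}.Finite ∧ IsClosed B ∧ B.Nonempty ∧ Q σ ⊆ g '' (f ⁻¹' B)
  let St := {p : PF × Set M // Good p.1 p.2}
  have hBne : ∀ (σ : PF) (B : Set M), Q σ ⊆ g '' (f ⁻¹' B) → B.Nonempty := by
    intro σ B hQB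
    obtain ⟨x, hx⟩ := Q_nonempty σ
    obtain ⟨k, hk, -⟩ := hQB hx
    exact ⟨f k, hk⟩
  have ex : ∀ (st : St) (n : ℕ), ∃ st' : St,
      Ext st.1.1 st'.1.1 ∧ st'.1.2 ⊆ st.1.2 ∧
      ∃ c, st'.1.2 ⊆ Metric.closedBall c ((1/2) ^ n) := by
    intro st n
    obtain ⟨⟨σ, B⟩, hfin, hBcl, hBn, hQB⟩ := st
    obtain ⟨τ, B', F, c0, hoff, hext, hB'cl, hB'B, hball, hQ'⟩ :=
      step_metric f hf g hg σ B hBcl hQB ((1/2) ^ n) (by positivity)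
    refine ⟨⟨⟨τ, B'⟩, ⟨?_, hB'cl, hBne τ B' hQ', hQ'⟩⟩, hext, hB'B, c0, hball⟩
    · apply (hfin.union F.finite_toSet).subset
      intro α hα
      by_cases hF : α ∈ F
      · exact Or.inr hF
      · exact Or.inl (by simpa [hoff α hF] using hα)
  haveI : Nonempty M := ⟨f (hgs (fun _ => pt0)).choose⟩
  have st0 : St := ⟨⟨fun _ => none, univ⟩, by
    refine ⟨by simp, isClosed_univ, univ_nonempty, ?_⟩
    intro x _
    obtain ⟨k, rfl⟩ := hgs x
    exact ⟨k, mem_univ _, rfl⟩⟩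
  let seq : ℕ → St := fun n => Nat.rec st0 (fun n st => (ex st n).choose) n
  have hsucc : ∀ n, seq (n+1) = (ex (seq n) n).choose := fun n => rfl
  have hstep : ∀ n, Ext (seq n).1.1 (seq (n+1)).1.1 ∧ (seq (n+1)).1.2 ⊆ (seq n).1.2 ∧
      ∃ c, (seq (n+1)).1.2 ⊆ Metric.closedBall c ((1/2) ^ n) := by
    intro n; rw [hsucc n]; exact (ex (seq n) n).choose_spec
  -- notation
  let σs : ℕ → PF := fun n => (seq n).1.1
  let Bs : ℕ → Set M := fun n => (seq n).1.2
  have hGood : ∀ n, Good (σs n) (Bs n) := fun n => (seq n).2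
  have hchain : ∀ k l, k ≤ l → Ext (σs k) (σs l) := by
    intro k l hkl
    induction l, hkl using Nat.le_induction with
    | base => exact Ext.rfl _
    | succ l hkl ih => exact ih.trans (hstep l).1
  have hBmono : ∀ k l, k ≤ l → Bs l ⊆ Bs k := by
    intro k l hkl
    induction l, hkl using Nat.le_induction with
    | base => exact subset_rfl
    | succ l hkl ih => exact subset_trans (hstep l).2.1 ih
  -- find t
  obtain ⟨t, ht⟩ := IsCompact.nonempty_iInter_of_sequence_nonempty_isCompact_isClosed
    Bs (fun n => (hstep n).2.1) (fun n => (hGood n).2.2.1)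
    ((hGood 0).2.1.isCompact) (fun n => (hGood n).2.1)
  -- key: every point of ⋂ Q (σs k) is hit from the fiber over t
  have key : ∀ x : Cube, (∀ k, x ∈ Q (σs k)) → ∃ κ : K, f κ = t ∧ g κ = x := by
    intro x hx
    have hA : (⋂ k, (f ⁻¹' Bs k ∩ g ⁻¹' {x})).Nonempty := by
      apply IsCompact.nonempty_iInter_of_sequence_nonempty_isCompact_isClosed
      · intro k
        exact inter_subset_inter (preimage_mono ((hstep k).2.1)) subset_rfl
      · intro k
        obtain ⟨κ, hκ, hgκ⟩ := (hGood k).2.2.2 (hx k)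
        exact ⟨κ, hκ, by simpa using hgκ⟩
      · exact (((hGood 0).2.1.preimage hf).inter
          ((isClosed_singleton).preimage hg)).isCompact
      · intro k
        exact ((hGood k).2.1.preimage hf).inter ((isClosed_singleton).preimage hg)
    obtain ⟨κ, hκ⟩ := hA
    simp only [mem_iInter, mem_inter_iff, mem_preimage, mem_singleton_iff] at hκ
    refine ⟨κ, ?_, (hκ 0).2⟩
    have hd : ∀ n : ℕ, dist (f κ) t ≤ 2 * (1/2) ^ n := by
      intro n
      obtain ⟨c, hc⟩ := (hstep n).2.2
      have h1 : f κ ∈ Metric.closedBall c ((1/2)^n) := hc (hκ (n+1)).1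
      have h2 : t ∈ Metric.closedBall c ((1/2)^n) := hc (mem_iInter.mp ht (n+1))
      calc dist (f κ) t ≤ dist (f κ) c + dist c t := dist_triangle _ _ _
        _ ≤ (1/2)^n + (1/2)^n := add_le_add h1 (by
            rw [dist_comm]; exact h2)
        _ = 2 * (1/2)^n := by ring
    have hlim : Filter.Tendsto (fun n : ℕ => 2 * (1/2 : ℝ) ^ n) Filter.atTop (nhds 0) := by
      simpa using (tendsto_pow_atTop_nhds_zero_of_lt_one (by norm_num) (by norm_num)
        (r := (1/2 : ℝ))).const_mul 2
    have : dist (f κ) t ≤ 0 := ge_of_tendsto' hlim hd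
    exact dist_le_zero.mp this
  -- the countable set of used coordinates
  let A : Set Omega1 := ⋃ k, {α | σs k α ≠ none}
  have hAc : A.Countable := countable_iUnion fun k => (hGood k).1.countable
  -- strict upper bound on the coordinates used
  obtain ⟨b, hb1, hb2⟩ := bound_lt_omega1 (insert 0 (Subtype.val '' A))
    ((hAc.image _).insert 0) ⟨0, mem_insert _ _⟩
    (by
      rintro a (rfl | ⟨⟨a', ha'⟩, -, rfl⟩)
      · rw [Cardinal.lt_ord]; simpa using Cardinal.aleph0_lt_aleph_one.trans_le' (by simp)
      · exact ha')
  -- the embedding of fresh coordinates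
  let e : Omega1 → Omega1 := fun β => ⟨b + 1 + β.val,
    add_lt_omega1 (add_lt_omega1 hb1 one_lt_omega1) β.2⟩
  have einj : Function.Injective e := by
    intro β γ h
    have := congrArg Subtype.val h
    simp only [e] at this
    exact Subtype.ext ((add_right_inj (b+1)).mp this)
  have enotA : ∀ β, e β ∉ A := by
    intro β hβ
    have h1 : (e β).val ≤ b := hb2 _ (mem_insert_of_mem _ ⟨e β, hβ, rfl⟩)
    have h2 : b < (e β).val := by
      calc b < b + 1 := by
            rw [Ordinal.add_one_eq_succ]; exact Order.lt_succ b
        _ ≤ b + 1 + β.val := le_self_add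
    exact absurd h1 (not_le.mpr h2)
  -- the final map
  refine ⟨t, fun κ => fun β => g κ.val (e β), ?_, ?_⟩
  · exact continuous_pi fun β => (continuous_apply (e β)).comp (hg.comp continuous_subtype_val)
  · intro y
    -- build a point of ⋂ Q (σs k) mapping to y
    let x : Cube := fun α =>
      if hα : ∃ k v, σs k α = some v then hα.choose_spec.choose
      else if hr : ∃ β, e β = α then y hr.choose else pt0
    have hxQ : ∀ k, x ∈ Q (σs k) := by
      intro k α v hv
      have hα : ∃ k v, σs k α = some v := ⟨k, v, hv⟩
      have hspec : σs hα.choose α = some hα.choose_spec.choose := hα.choose_spec.choose_spec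
      have : x α = hα.choose_spec.choose := by simp only [x, dif_pos hα]
      rw [this]
      rcases le_total k hα.choose with hle | hle
      · have h2 := hchain k _ hle α v hv
        exact (Option.some_injective _ (h2.symm.trans hspec)).symm
      · have h2 := hchain _ k hle α _ hspec
        exact Option.some_injective _ (h2.symm.trans hv)
    have hxe : ∀ β, x (e β) = y β := by
      intro β
      have hα : ¬ ∃ k v, σs k (e β) = some v := by
        rintro ⟨k, v, hkv⟩
        exact enotA β (mem_iUnion.mpr ⟨k, by simp [hkv]⟩)
      have hr : ∃ β', e β' = e β := ⟨β, rfl⟩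
      have : x (e β) = y hr.choose := by simp only [x, dif_neg hα, dif_pos hr]
      rw [this, einj hr.choose_spec]
    obtain ⟨κ, hκt, hκx⟩ := key x hxQ
    refine ⟨⟨κ, by simp [hκt]⟩, ?_⟩
    funext β
    simp only [hκx, hxe β]
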